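/- Let (Ω, μ) be a probability space, let n, N be positive natural numbers, let φ : Ω → ℝ^{N+1} be measurable with square-integrable entries, and let A : Ω → M_n(ℝ) be measurable such that ω ↦ φᵢ(ω)φⱼ(ω)·A(ω) is Bochner integrable for all 0 ≤ i, j ≤ N. Write Φₙ(ω) := φ(ω) ⊗ Iₙ (with φ(ω) viewed as an (N+1) × 1 matrix), let G be the Gram matrix with entries G_{ij} = ∫ φᵢ φⱼ dμ, and let x_pc, y_pc ∈ ℝ^{n(N+1)}. Then the Galerkin conditions ∫ φᵢ(ω)·(Φₙ(ω)ᵀ y_pc − A(ω) Φₙ(ω)ᵀ x_pc) dμ(ω) = 0 for all 0 ≤ i ≤ N hold if and only if (G ⊗ Iₙ) y_pc = (∫ (φ(ω)φ(ω)ᵀ) ⊗ A(ω) dμ(ω)) x_pc. -/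

import Mathlib

open Matrix MeasureTheory
open scoped Kronecker Matrix.Norms.L2Operator

/-- `φ ⊗ Iₙ`: the Kronecker product of the vector `φ ∈ ℝ^{N+1}` (viewed as an `(N+1) × 1`
matrix) with the `n × n` identity matrix, giving an `n(N+1) × n` real matrix (the trivial
`Fin 1` column index is dropped). -/
noncomputable def vecKronId (n N : ℕ) (φ : Fin (N + 1) → ℝ) :
    Matrix (Fin (N + 1) × Fin n) (Fin n) ℝ :=
  (Matrix.replicateCol (Fin 1) φ ⊗ₖ (1 : Matrix (Fin n) (Fin n) ℝ)).submatrix id fun j => ((0 : Fin 1), j)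

lemma vecKronId_mulVec (n N : ℕ) (v : Fin (N + 1) → ℝ) (z : Fin (N + 1) × Fin n → ℝ)
    (b : Fin n) : ((vecKronId n N v)ᵀ *ᵥ z) b = ∑ j, v j * z (j, b) := by
  simp [vecKronId, Matrix.mulVec, dotProduct, Fintype.sum_prod_type, Matrix.one_apply,
    mul_comm, mul_ite, ite_mul, mul_assoc]

/-- The entry-extraction continuous linear map on matrices. -/
noncomputable def entryCLM (m n : Type*) [Fintype m] [Fintype n] [DecidableEq m] [DecidableEq n]
    (a : m) (b : n) : Matrix m n ℝ →L[ℝ] ℝ :=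
  LinearMap.toContinuousLinearMap
    { toFun := fun M => M a b
      map_add' := fun _ _ => rfl
      map_smul' := fun _ _ => rfl }

/-- Pointwise decomposition of the Galerkin integrand into rank-one pieces. -/
lemma galerkin_integrand_rep {Ω : Type*} (n N : ℕ) (φ : Ω → Fin (N + 1) → ℝ)
    (A : Ω → Matrix (Fin n) (Fin n) ℝ) (xpc ypc : Fin (N + 1) × Fin n → ℝ)
    (i : Fin (N + 1)) (ω : Ω) :
    φ ω i • ((vecKronId n N (φ ω))ᵀ *ᵥ ypc - A ω *ᵥ ((vecKronId n N (φ ω))ᵀ *ᵥ xpc))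
    = (∑ j, (φ ω i * φ ω j) • (fun a => ypc (j, a) : Fin n → ℝ))
      - ∑ q : (Fin (N + 1) × Fin n) × Fin n,
          (φ ω i * φ ω q.1.1 * A ω q.2 q.1.2 * xpc q.1) • (Pi.single q.2 1 : Fin n → ℝ) := by
  have hAv : ∀ w : Fin (N + 1) × Fin n → ℝ, ∀ a : Fin n,
      (A ω *ᵥ ((vecKronId n N (φ ω))ᵀ *ᵥ w)) a = ∑ b, A ω a b * ∑ j, φ ω j * w (j, b) := by
    intro w a
    show dotProduct _ _ = _
    rw [dotProduct]
    exact Finset.sum_congr rfl fun b _ => by rw [vecKronId_mulVec]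
  funext a
  simp only [Pi.smul_apply, Pi.sub_apply, smul_eq_mul, vecKronId_mulVec, hAv]
  simp only [Finset.sum_apply, Pi.sub_apply, Pi.smul_apply, smul_eq_mul, Pi.single_apply,
    Fintype.sum_prod_type, mul_ite, mul_one, mul_zero, Finset.sum_ite_eq, Finset.mem_univ,
    if_true]
  rw [mul_sub, Finset.mul_sum, Finset.mul_sum]
  congr 1
  · exact Finset.sum_congr rfl fun j _ => by ring
  · rw [Finset.sum_comm]
    simp only [Finset.mul_sum]
    ring_nf
    exact Finset.sum_congr rfl fun b _ => Finset.sum_congr rfl fun j _ => by ring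

/-- The Galerkin conditions `E[φᵢ · (Φₙᵀ y_pc − A Φₙᵀ x_pc)] = 0` for `i = 0, …, N` hold iff
`(G ⊗ Iₙ) y_pc = (E[(φφᵀ) ⊗ A]) x_pc`, where `G i j = E[φᵢφⱼ]` is the Gram matrix. This
characterizes the polynomial-chaos (Galerkin) projection defining the surrogate dynamics. -/
theorem stmt16 {Ω : Type*} [MeasurableSpace Ω] (μ : Measure Ω) [IsProbabilityMeasure μ]
    (n N : ℕ) (hn : 0 < n) (hN : 0 < N)
    (φ : Ω → Fin (N + 1) → ℝ)
    (hφmeas : ∀ i, Measurable fun ω => φ ω i)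
    (hφL2 : ∀ i, MemLp (fun ω => φ ω i) 2 μ)
    (A : Ω → Matrix (Fin n) (Fin n) ℝ)
    (hAmeas : ∀ a b : Fin n, Measurable fun ω => A ω a b)
    (hInt : ∀ i j : Fin (N + 1), Integrable (fun ω => (φ ω i * φ ω j) • A ω) μ)
    (xpc ypc : Fin (N + 1) × Fin n → ℝ) :
    (∀ i : Fin (N + 1),
        ∫ ω, φ ω i • ((vecKronId n N (φ ω))ᵀ *ᵥ ypc -
          A ω *ᵥ ((vecKronId n N (φ ω))ᵀ *ᵥ xpc)) ∂μ = 0) ↔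
      ((Matrix.of fun i j => ∫ ω, φ ω i * φ ω j ∂μ) ⊗ₖ
          (1 : Matrix (Fin n) (Fin n) ℝ)) *ᵥ ypc =
        (∫ ω, (Matrix.of fun i j : Fin (N + 1) => φ ω i * φ ω j) ⊗ₖ A ω ∂μ) *ᵥ xpc := by
  -- scalar integrabilities
  have hmul : ∀ i j, Integrable (fun ω => φ ω i * φ ω j) μ := by
    intro i j
    have := (hφL2 j).smul (φ := fun ω => φ ω i) (hφL2 i) (r := 1)
    simpa [smul_eq_mul, mul_comm, memLp_one_iff_integrable, Pi.mul_def] using this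
  have hmulA : ∀ (i j : Fin (N + 1)) (a b : Fin n),
      Integrable (fun ω => φ ω i * φ ω j * A ω a b) μ := by
    intro i j a b
    have := (entryCLM (Fin n) (Fin n) a b).integrable_comp (hInt i j)
    exact this
  -- entries of the Kronecker integral
  have hFrep : (fun ω => (Matrix.of fun i j : Fin (N + 1) => φ ω i * φ ω j) ⊗ₖ A ω)
      = fun ω => ∑ p : Fin (N + 1) × Fin n, ∑ q : Fin (N + 1) × Fin n,
          (φ ω p.1 * φ ω q.1 * A ω p.2 q.2) • Matrix.single p q (1 : ℝ) := by
    funext ω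
    ext p q
    simp [Matrix.sum_apply, Matrix.single, Matrix.smul_apply, smul_eq_mul,
      Fintype.sum_prod_type, Finset.sum_ite_eq, Finset.sum_ite_eq', ite_and, mul_ite,
      mul_one, mul_zero, Prod.ext_iff]
  have hFval : (∫ ω, (Matrix.of fun i j : Fin (N + 1) => φ ω i * φ ω j) ⊗ₖ A ω ∂μ)
      = ∑ p : Fin (N + 1) × Fin n, ∑ q : Fin (N + 1) × Fin n,
          (∫ ω, φ ω p.1 * φ ω q.1 * A ω p.2 q.2 ∂μ) • Matrix.single p q (1 : ℝ) := by
    rw [hFrep, integral_finset_sum _ fun p _ => integrable_finset_sum _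
      fun q _ => (hmulA p.1 q.1 p.2 q.2).smul_const _]
    refine Finset.sum_congr rfl fun p _ => ?_
    rw [integral_finset_sum _ fun q _ => (hmulA p.1 q.1 p.2 q.2).smul_const _]
    exact Finset.sum_congr rfl fun q _ => integral_smul_const _ _
  have hFentry : ∀ (i j : Fin (N + 1)) (a b : Fin n),
      (∫ ω, (Matrix.of fun i j : Fin (N + 1) => φ ω i * φ ω j) ⊗ₖ A ω ∂μ) (i, a) (j, b)
        = ∫ ω, φ ω i * φ ω j * A ω a b ∂μ := by
    intro i j a b
    rw [hFval]
    simp [Matrix.sum_apply, Matrix.single, Matrix.smul_apply, smul_eq_mul,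
      Fintype.sum_prod_type, Finset.sum_ite_eq, ite_and, mul_ite, mul_one, mul_zero,
      Prod.ext_iff]
  -- value of the Galerkin integral, componentwise
  have hTval : ∀ (i : Fin (N + 1)) (a : Fin n),
      (∫ ω, φ ω i • ((vecKronId n N (φ ω))ᵀ *ᵥ ypc -
          A ω *ᵥ ((vecKronId n N (φ ω))ᵀ *ᵥ xpc)) ∂μ) a
      = (∑ j, (∫ ω, φ ω i * φ ω j ∂μ) * ypc (j, a))
        - ∑ q : Fin (N + 1) × Fin n, (∫ ω, φ ω i * φ ω q.1 * A ω a q.2 ∂μ) * xpc q := by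
    intro i a
    have h1 : Integrable (fun ω => ∑ j, (φ ω i * φ ω j) • (fun a => ypc (j, a) : Fin n → ℝ)) μ :=
      integrable_finset_sum _ fun j _ => (hmul i j).smul_const _
    have h2 : Integrable (fun ω => ∑ q : (Fin (N + 1) × Fin n) × Fin n,
        (φ ω i * φ ω q.1.1 * A ω q.2 q.1.2 * xpc q.1) • (Pi.single q.2 1 : Fin n → ℝ)) μ :=
      integrable_finset_sum _ fun q _ =>
        (((hmulA i q.1.1 q.2 q.1.2).mul_const (xpc q.1))).smul_const _
    have hrep := galerkin_integrand_rep n N φ A xpc ypc i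
    calc (∫ ω, φ ω i • ((vecKronId n N (φ ω))ᵀ *ᵥ ypc -
          A ω *ᵥ ((vecKronId n N (φ ω))ᵀ *ᵥ xpc)) ∂μ) a
        = (∫ ω, ((∑ j, (φ ω i * φ ω j) • (fun a => ypc (j, a) : Fin n → ℝ))
            - ∑ q : (Fin (N + 1) × Fin n) × Fin n,
              (φ ω i * φ ω q.1.1 * A ω q.2 q.1.2 * xpc q.1) • (Pi.single q.2 1 : Fin n → ℝ)) ∂μ) a := by
          simp_rw [hrep]
      _ = ((∫ ω, ∑ j, (φ ω i * φ ω j) • (fun a => ypc (j, a) : Fin n → ℝ) ∂μ)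
            - ∫ ω, ∑ q : (Fin (N + 1) × Fin n) × Fin n,
              (φ ω i * φ ω q.1.1 * A ω q.2 q.1.2 * xpc q.1) • (Pi.single q.2 1 : Fin n → ℝ) ∂μ) a := by
          rw [integral_sub h1 h2]
      _ = (∑ j, (∫ ω, φ ω i * φ ω j ∂μ) * ypc (j, a))
            - ∑ q : Fin (N + 1) × Fin n, (∫ ω, φ ω i * φ ω q.1 * A ω a q.2 ∂μ) * xpc q := by
          rw [integral_finset_sum _ fun j _ => (hmul i j).smul_const _,
            integral_finset_sum _ fun q _ =>
              (((hmulA i q.1.1 q.2 q.1.2).mul_const (xpc q.1))).smul_const _]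
          simp_rw [integral_smul_const]
          simp only [Pi.sub_apply, Finset.sum_apply, Pi.smul_apply, smul_eq_mul,
            Pi.single_apply, Fintype.sum_prod_type, mul_ite, mul_one, mul_zero,
            Finset.sum_ite_eq, Finset.mem_univ, if_true]
          congr 1
          simp_rw [integral_mul_const]
  -- entries of both sides of the matrix equation
  have hLHS : ∀ (i : Fin (N + 1)) (a : Fin n),
      (((Matrix.of fun i j => ∫ ω, φ ω i * φ ω j ∂μ) ⊗ₖ
          (1 : Matrix (Fin n) (Fin n) ℝ)) *ᵥ ypc) (i, a)
        = ∑ j, (∫ ω, φ ω i * φ ω j ∂μ) * ypc (j, a) := by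
    intro i a
    simp [Matrix.mulVec, dotProduct, Fintype.sum_prod_type, Matrix.one_apply, mul_ite,
      mul_assoc]
  have hRHS : ∀ (i : Fin (N + 1)) (a : Fin n),
      ((∫ ω, (Matrix.of fun i j : Fin (N + 1) => φ ω i * φ ω j) ⊗ₖ A ω ∂μ) *ᵥ xpc) (i, a)
        = ∑ q : Fin (N + 1) × Fin n, (∫ ω, φ ω i * φ ω q.1 * A ω a q.2 ∂μ) * xpc q := by
    intro i a
    show dotProduct _ _ = _
    rw [dotProduct]
    exact Finset.sum_congr rfl fun q _ => by rw [hFentry i q.1 a q.2]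
  constructor
  · intro h
    funext p
    obtain ⟨i, a⟩ := p
    rw [hLHS, hRHS]
    have := congrFun (h i) a
    rw [hTval i a] at this
    simpa [sub_eq_zero] using this
  · intro h i
    funext a
    rw [Pi.zero_apply, hTval i a, sub_eq_zero]
    have := congrFun h (i, a)
    rw [hLHS, hRHS] at this
    exact this
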